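/- Let (g,⟨·,·⟩) be the double extension of (g₀,⟨·,·⟩₀) by (D, K, L). Then the Ricci operator of (g,⟨·,·⟩) satisfies Ric(u) = Δ + Γv, Ric(e) = Ric₀(e) + ⟨Δ,e⟩₀ v for e ∈ g₀, and Ric(v) = 0, where Γ = −(1/2)tr(D²) − (1/2)tr(D*D) − (1/4)tr(K²) + ⟨L, Z₀⟩₀, and Δ ∈ g₀ is determined by ⟨Δ,e⟩₀ = −(1/2)tr((D+D*)∘ad₀ e) + (1/2)⟨(D−K)(Z₀), e⟩₀ − (1/4)tr(K∘S⁰_e) for all e ∈ g₀. -/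

import Mathlib

/-- The Ricci tensor of a left-invariant metric determined by a connection `nabla`:
`ric(x,y) = tr (ξ ↦ ∇_ξ ∇_x y − ∇_x ∇_ξ y − ∇_{[ξ,x]} y)`. -/
noncomputable def ricci {g : Type*} [LieRing g] [LieAlgebra ℝ g]
    (nabla : g →ₗ[ℝ] g →ₗ[ℝ] g) (x y : g) : ℝ :=
  LinearMap.trace ℝ g
    (nabla.flip (nabla x y) - nabla x ∘ₗ nabla.flip y +
      nabla.flip y ∘ₗ (LieAlgebra.ad ℝ g x : g →ₗ[ℝ] g))

/-- `nabla` is the Levi-Civita connection of the metric Lie algebra `(g, B)`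
(Koszul formula). -/
def IsLeviCivita {g : Type*} [LieRing g] [LieAlgebra ℝ g]
    (B : g →ₗ[ℝ] g →ₗ[ℝ] ℝ) (nabla : g →ₗ[ℝ] g →ₗ[ℝ] g) : Prop :=
  ∀ x y z : g, 2 * B (nabla x y) z = B ⁅x, y⁆ z - B ⁅y, z⁆ x + B ⁅z, x⁆ y

/-- Ricci-parallel: `(∇_x ric)(y,z) = −ric(∇_x y, z) − ric(y, ∇_x z) = 0`. -/
noncomputable def IsRicciParallel {g : Type*} [LieRing g] [LieAlgebra ℝ g]
    (nabla : g →ₗ[ℝ] g →ₗ[ℝ] g) : Prop :=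
  ∀ x y z : g, ricci nabla (nabla x y) z + ricci nabla y (nabla x z) = 0


private lemma tr_one_dim (h : ℝ →ₗ[ℝ] ℝ) : LinearMap.trace ℝ ℝ h = h 1 := by
  have hh : h = (h 1) • LinearMap.id := by
    ext
    simp [mul_comm]
  rw [hh, map_smul, LinearMap.trace_id, Module.finrank_self]
  simp

private lemma tr_adj {V : Type*} [AddCommGroup V] [Module ℝ V] [FiniteDimensional ℝ V]
    (B : V →ₗ[ℝ] V →ₗ[ℝ] ℝ) (hnd : ∀ x : V, (∀ y : V, B x y = 0) → x = 0)
    (M N : V →ₗ[ℝ] V) (h : ∀ a b, B (M a) b = B a (N b)) :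
    LinearMap.trace ℝ V M = LinearMap.trace ℝ V N := by
  have hinj : Function.Injective B := by
    rw [← LinearMap.ker_eq_bot, LinearMap.ker_eq_bot']
    intro x hx; exact hnd x (fun y => by simp [hx])
  have hsurj : Function.Surjective B :=
    (LinearMap.injective_iff_surjective_of_finrank_eq_finrank (by simp [Subspace.dual_finrank_eq])).mp hinj
  have hΦ : LinearMap.BilinForm.Nondegenerate B :=
    ⟨hnd, fun y hy => (Module.forall_dual_apply_eq_zero_iff ℝ y).mp
      (fun φ => by obtain ⟨x, rfl⟩ := hsurj φ; exact hy x)⟩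
  set Φ := LinearMap.BilinForm.toDual B hΦ with hΦdef
  have key : M = (Φ.symm.conj) (Module.Dual.transpose (R := ℝ) N) := by
    ext a
    apply Φ.injective
    rw [LinearEquiv.conj_apply]
    simp only [LinearMap.comp_apply, LinearEquiv.coe_coe, LinearEquiv.apply_symm_apply]
    ext b
    rw [Module.Dual.transpose_apply, LinearMap.comp_apply]
    show Φ (M a) b = Φ a (N b)
    rw [LinearMap.BilinForm.toDual_def, LinearMap.BilinForm.toDual_def]
    exact h a b
  rw [key, LinearMap.trace_conj', LinearMap.trace_transpose']

set_option maxHeartbeats 4000000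

/-- The Ricci operator of a double extension. -/
theorem stmt_14 (g₀ : Type*) [LieRing g₀] [LieAlgebra ℝ g₀] [FiniteDimensional ℝ g₀]
    (B₀ : g₀ →ₗ[ℝ] g₀ →ₗ[ℝ] ℝ)
    (hsymm₀ : ∀ e f : g₀, B₀ e f = B₀ f e)
    (hnd₀ : ∀ e : g₀, (∀ f : g₀, B₀ e f = 0) → e = 0)
    (nabla₀ : g₀ →ₗ[ℝ] g₀ →ₗ[ℝ] g₀)
    (hLC₀ : IsLeviCivita B₀ nabla₀)
    (D K Dstar : g₀ →ₗ[ℝ] g₀) (L : g₀)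
    (hD : ∀ e f : g₀, D ⁅e, f⁆ = ⁅D e, f⁆ + ⁅e, D f⁆)
    (hDstar : ∀ e f : g₀, B₀ (Dstar e) f = B₀ e (D f))
    (hKskew : ∀ e f : g₀, B₀ (K e) f = -(B₀ e (K f)))
    (hJacobi : ∀ e f : g₀, B₀ L ⁅e, f⁆ = B₀ ((K ∘ₗ D + Dstar ∘ₗ K) e) f)
    (g : Type*) [LieRing g] [LieAlgebra ℝ g] [FiniteDimensional ℝ g]
    (u v : g) (ι : g₀ →ₗ[ℝ] g)
    (hspan : ∀ w : g, ∃ (a b : ℝ) (e : g₀), w = a • u + b • v + ι e)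
    (hbr1 : ∀ e : g₀, ⁅u, ι e⁆ = ι (D e) + (B₀ L e) • v)
    (hbr2 : ∀ e f : g₀, ⁅ι e, ι f⁆ = ι ⁅e, f⁆ + (B₀ (K e) f) • v)
    (hbr3 : ∀ x : g, ⁅x, v⁆ = 0)
    (B : g →ₗ[ℝ] g →ₗ[ℝ] ℝ)
    (hB : ∀ (a b a' b' : ℝ) (e e' : g₀),
      B (a • u + b • v + ι e) (a' • u + b' • v + ι e')
        = a * b' + a' * b + B₀ e e')
    (hnd : ∀ w : g, (∀ z : g, B w z = 0) → w = 0)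
    (nabla : g →ₗ[ℝ] g →ₗ[ℝ] g)
    (hLC : IsLeviCivita B nabla)
    (Z₀ : g₀)
    (hZ : ∀ f : g₀, B₀ Z₀ f = LinearMap.trace ℝ g₀ (LieAlgebra.ad ℝ g₀ f : g₀ →ₗ[ℝ] g₀))
    (S : g₀ →ₗ[ℝ] g₀ →ₗ[ℝ] g₀)
    (hS : ∀ e f f' : g₀, B₀ (S e f) f' = B₀ e ⁅f, f'⁆)
    (Δ : g₀)
    (hΔ : ∀ e : g₀, B₀ Δ e
      = -(1/2) * LinearMap.trace ℝ g₀ ((D + Dstar) ∘ₗ (LieAlgebra.ad ℝ g₀ e : g₀ →ₗ[ℝ] g₀))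
        + (1/2) * B₀ ((D - K) Z₀) e - (1/4) * LinearMap.trace ℝ g₀ (K ∘ₗ S e))
    (Γ : ℝ)
    (hΓ : Γ = -(1/2) * LinearMap.trace ℝ g₀ (D ∘ₗ D)
        - (1/2) * LinearMap.trace ℝ g₀ (Dstar ∘ₗ D)
        - (1/4) * LinearMap.trace ℝ g₀ (K ∘ₗ K) + B₀ L Z₀)
    (Ric : g →ₗ[ℝ] g)
    (hRic : ∀ x y : g, B (Ric x) y = ricci nabla x y)
    (Ric₀ : g₀ →ₗ[ℝ] g₀)
    (hRic₀ : ∀ e f : g₀, B₀ (Ric₀ e) f = ricci nabla₀ e f) :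
    Ric u = ι Δ + Γ • v ∧
    (∀ e : g₀, Ric (ι e) = ι (Ric₀ e) + (B₀ Δ e) • v) ∧
    Ric v = 0 := by
  classical
  -- basic values of B
  have hBuu : B u u = 0 := by simpa using hB 1 0 1 0 0 0
  have hBuv : B u v = 1 := by simpa using hB 1 0 0 1 0 0
  have hBvu : B v u = 1 := by simpa using hB 0 1 1 0 0 0
  have hBvv : B v v = 0 := by simpa using hB 0 1 0 1 0 0
  have hBui : ∀ e : g₀, B u (ι e) = 0 := fun e => by simpa using hB 1 0 0 0 0 e
  have hBiu : ∀ e : g₀, B (ι e) u = 0 := fun e => by simpa using hB 0 0 1 0 e 0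
  have hBvi : ∀ e : g₀, B v (ι e) = 0 := fun e => by simpa using hB 0 1 0 0 0 e
  have hBiv : ∀ e : g₀, B (ι e) v = 0 := fun e => by simpa using hB 0 0 0 1 e 0
  have hBii : ∀ e f : g₀, B (ι e) (ι f) = B₀ e f := fun e f => by simpa using hB 0 0 0 0 e f
  -- extensionality
  have hext₀ : ∀ a b : g₀, (∀ c : g₀, B₀ a c = B₀ b c) → a = b := by
    intro a b h
    have h0 : ∀ c, B₀ (a - b) c = 0 := by
      intro c; rw [map_sub, LinearMap.sub_apply, h c, sub_self]
    exact sub_eq_zero.mp (hnd₀ _ h0)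
  have hext : ∀ w w' : g, B w u = B w' u → B w v = B w' v →
      (∀ f : g₀, B w (ι f) = B w' (ι f)) → w = w' := by
    intro w w' h1 h2 h3
    have h0 : ∀ z, B (w - w') z = 0 := by
      intro z
      obtain ⟨a, b, e, rfl⟩ := hspan z
      have e1 : B (w - w') u = 0 := by rw [map_sub, LinearMap.sub_apply, h1, sub_self]
      have e2 : B (w - w') v = 0 := by rw [map_sub, LinearMap.sub_apply, h2, sub_self]
      have e3 : B (w - w') (ι e) = 0 := by rw [map_sub, LinearMap.sub_apply, h3 e, sub_self]
      rw [map_add, map_add, map_smul, map_smul, e1, e2, e3]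
      simp
    exact sub_eq_zero.mp (hnd _ h0)
  -- brackets
  have hbr1' : ∀ e : g₀, ⁅ι e, u⁆ = -(ι (D e) + (B₀ L e) • v) := by
    intro e; rw [← lie_skew, hbr1]
  have hbr3' : ∀ x : g, ⁅v, x⁆ = 0 := fun x => by rw [← lie_skew, hbr3, neg_zero]
  have hbrv : ∀ w z : g, B ⁅w, z⁆ v = 0 := by
    intro w z
    obtain ⟨a, b, e, rfl⟩ := hspan w
    obtain ⟨a', b', e', rfl⟩ := hspan z
    simp only [add_lie, lie_add, smul_lie, lie_smul, lie_self, hbr1, hbr1', hbr2, hbr3, hbr3',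
      map_add, map_smul, map_neg, map_zero, smul_zero, add_zero, zero_add,
      LinearMap.add_apply, LinearMap.smul_apply, LinearMap.neg_apply, LinearMap.zero_apply,
      hBiv, hBvv, smul_eq_mul]
    ring
  -- Koszul halved
  have hK : ∀ x y z : g, B (nabla x y) z = (B ⁅x, y⁆ z - B ⁅y, z⁆ x + B ⁅z, x⁆ y) / 2 := by
    intro x y z; have := hLC x y z; linarith
  have hK₀ : ∀ x y z : g₀, B₀ (nabla₀ x y) z = (B₀ ⁅x, y⁆ z - B₀ ⁅y, z⁆ x + B₀ ⁅z, x⁆ y) / 2 := by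
    intro x y z; have := hLC₀ x y z; linarith
  -- values of nabla
  have n5 : ∀ x : g, nabla x v = 0 := by
    intro x
    refine hext _ _ ?_ ?_ ?_
    · rw [hK]; simp [hbr3, hbr3', hbrv]
    · rw [hK]; simp [hbr3, hbr3', hbrv]
    · intro f; rw [hK]; simp [hbr3, hbr3', hbrv]
  have n6 : ∀ x : g, nabla v x = 0 := by
    intro x
    refine hext _ _ ?_ ?_ ?_
    · rw [hK]; simp [hbr3, hbr3', hbrv]
    · rw [hK]; simp [hbr3, hbr3', hbrv]
    · intro f; rw [hK]; simp [hbr3, hbr3', hbrv]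
  have n1 : nabla u u = -ι L := by
    refine hext _ _ ?_ ?_ ?_
    · rw [hK]
      simp [lie_self, hBiu, hBuu]
    · rw [hK]
      simp [lie_self, hbr3, hbr3', hBiv]
    · intro f
      rw [hK]
      simp only [lie_self, hbr1, hbr1', map_add, map_neg, map_smul, map_zero,
        LinearMap.add_apply, LinearMap.neg_apply, LinearMap.smul_apply, LinearMap.zero_apply,
        hBuu, hBuv, hBvu, hBvv, hBui, hBiu, hBvi, hBiv, hBii, smul_eq_mul, zero_add, add_zero,
        mul_one, mul_zero, zero_mul, neg_zero, zero_sub, zero_div, neg_add_rev]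
      try ring
  have n2 : ∀ e : g₀, nabla u (ι e) = (2⁻¹ : ℝ) • ι (D e - K e - Dstar e) + (B₀ L e) • v := by
    intro e
    refine hext _ _ ?_ ?_ ?_
    · rw [hK]
      simp only [hbr1, hbr1', lie_self, map_add, map_neg, map_smul, map_zero, map_sub,
        LinearMap.add_apply, LinearMap.neg_apply, LinearMap.smul_apply, LinearMap.zero_apply,
        hBuu, hBuv, hBvu, hBvv, hBui, hBiu, hBvi, hBiv, hBii, smul_eq_mul, zero_add, add_zero,
        mul_one, mul_zero, zero_mul, neg_zero, LinearMap.sub_apply, sub_zero, zero_sub, sub_self, zero_div, neg_neg]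
      try ring
    · rw [hK]
      simp only [hbr1, hbr1', hbr3, hbr3', map_add, map_neg, map_smul, map_zero, map_sub,
        LinearMap.add_apply, LinearMap.neg_apply, LinearMap.smul_apply, LinearMap.zero_apply,
        hBuu, hBuv, hBvu, hBvv, hBui, hBiu, hBvi, hBiv, hBii, smul_eq_mul, zero_add, add_zero,
        mul_one, mul_zero, zero_mul, neg_zero, LinearMap.sub_apply, sub_zero, zero_sub, sub_self, zero_div, neg_neg]
      try ring
    · intro f
      rw [hK]
      simp only [hbr1, hbr1', hbr2, map_add, map_neg, map_smul, map_zero, map_sub,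
        LinearMap.add_apply, LinearMap.neg_apply, LinearMap.smul_apply, LinearMap.zero_apply,
        hBuu, hBuv, hBvu, hBvv, hBui, hBiu, hBvi, hBiv, hBii, smul_eq_mul, zero_add, add_zero,
        mul_one, mul_zero, zero_mul, neg_zero, LinearMap.sub_apply, sub_zero, zero_sub, sub_self, zero_div, neg_neg]
      have h1 : B₀ (Dstar e) f = B₀ (D f) e := by
        rw [hDstar e f, hsymm₀ e (D f)]
      linarith
  have n3 : ∀ e : g₀, nabla (ι e) u = -((2⁻¹ : ℝ) • ι (D e + Dstar e + K e)) := by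
    intro e
    refine hext _ _ ?_ ?_ ?_
    · rw [hK]
      simp only [hbr1, hbr1', lie_self, map_add, map_neg, map_smul, map_zero,
        LinearMap.add_apply, LinearMap.neg_apply, LinearMap.smul_apply, LinearMap.zero_apply,
        hBuu, hBuv, hBvu, hBvv, hBui, hBiu, hBvi, hBiv, hBii, smul_eq_mul, zero_add, add_zero,
        mul_one, mul_zero, zero_mul, neg_zero, LinearMap.sub_apply, sub_zero, zero_sub, sub_self, zero_div, neg_neg]
      try ring
    · rw [hK]
      simp only [hbr1, hbr1', hbr3, hbr3', map_add, map_neg, map_smul, map_zero,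
        LinearMap.add_apply, LinearMap.neg_apply, LinearMap.smul_apply, LinearMap.zero_apply,
        hBuu, hBuv, hBvu, hBvv, hBui, hBiu, hBvi, hBiv, hBii, smul_eq_mul, zero_add, add_zero,
        mul_one, mul_zero, zero_mul, neg_zero, LinearMap.sub_apply, sub_zero, zero_sub, sub_self, zero_div, neg_neg]
      try ring
    · intro f
      rw [hK]
      simp only [hbr1, hbr1', hbr2, map_add, map_neg, map_smul, map_zero,
        LinearMap.add_apply, LinearMap.neg_apply, LinearMap.smul_apply, LinearMap.zero_apply,
        hBuu, hBuv, hBvu, hBvv, hBui, hBiu, hBvi, hBiv, hBii, smul_eq_mul, zero_add, add_zero,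
        mul_one, mul_zero, zero_mul, neg_zero, LinearMap.sub_apply, sub_zero, zero_sub, sub_self, zero_div, neg_neg]
      have h1 : B₀ (Dstar e) f = B₀ (D f) e := by
        rw [hDstar e f, hsymm₀ e (D f)]
      have h2 : B₀ (K f) e = -(B₀ (K e) f) := by
        rw [hKskew f e, hsymm₀ f (K e)]
      linarith
  have n4 : ∀ e f : g₀, nabla (ι e) (ι f)
      = ι (nabla₀ e f) + ((2⁻¹ : ℝ) * B₀ (D e + Dstar e + K e) f) • v := by
    intro e f
    refine hext _ _ ?_ ?_ ?_
    · rw [hK]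
      simp only [hbr1, hbr1', hbr2, map_add, map_neg, map_smul, map_zero,
        LinearMap.add_apply, LinearMap.neg_apply, LinearMap.smul_apply, LinearMap.zero_apply,
        hBuu, hBuv, hBvu, hBvv, hBui, hBiu, hBvi, hBiv, hBii, smul_eq_mul, zero_add, add_zero,
        mul_one, mul_zero, zero_mul, neg_zero, LinearMap.sub_apply, sub_zero, zero_sub, sub_self, zero_div, neg_neg]
      have h1 : B₀ (D f) e = B₀ (Dstar e) f := by
        rw [hDstar e f, hsymm₀ e (D f)]
      linarith
    · rw [hK]
      simp only [hbr1, hbr1', hbr2, hbr3, hbr3', map_add, map_neg, map_smul, map_zero,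
        LinearMap.add_apply, LinearMap.neg_apply, LinearMap.smul_apply, LinearMap.zero_apply,
        hBuu, hBuv, hBvu, hBvv, hBui, hBiu, hBvi, hBiv, hBii, smul_eq_mul, zero_add, add_zero,
        mul_one, mul_zero, zero_mul, neg_zero, LinearMap.sub_apply, sub_zero, zero_sub, sub_self, zero_div, neg_neg]
    · intro f'
      rw [hK]
      have hr : B (ι (nabla₀ e f) + ((2⁻¹ : ℝ) * B₀ (D e + Dstar e + K e) f) • v) (ι f')
          = (B₀ ⁅e, f⁆ f' - B₀ ⁅f, f'⁆ e + B₀ ⁅f', e⁆ f) / 2 := by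
        simp only [map_add, map_smul, LinearMap.add_apply, LinearMap.smul_apply,
          hBii, hBiv, hBvi, hBvv, smul_eq_mul, mul_zero, add_zero]
        rw [hK₀]
      rw [hr]
      simp only [hbr1, hbr1', hbr2, map_add, map_neg, map_smul, map_zero,
        LinearMap.add_apply, LinearMap.neg_apply, LinearMap.smul_apply, LinearMap.zero_apply,
        hBuu, hBuv, hBvu, hBvv, hBui, hBiu, hBvi, hBiv, hBii, smul_eq_mul, zero_add, add_zero,
        mul_one, mul_zero, zero_mul, neg_zero, LinearMap.sub_apply, sub_zero, zero_sub, sub_self, zero_div, neg_neg]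
  -- projection onto the g₀ part
  obtain ⟨π₀, hπ⟩ : ∃ p : g →ₗ[ℝ] g₀, ∀ (w : g) (f : g₀), B₀ (p w) f = B w (ι f) := by
    have hndB : LinearMap.BilinForm.Nondegenerate B₀ :=
      ⟨hnd₀, fun y hy => hnd₀ y (fun x => by rw [hsymm₀]; exact hy x)⟩
    refine ⟨(LinearMap.BilinForm.toDual B₀ hndB).symm.toLinearMap ∘ₗ (B.compl₂ ι), ?_⟩
    intro w f
    simp only [LinearMap.comp_apply, LinearEquiv.coe_coe]
    rw [LinearMap.BilinForm.apply_toDual_symm_apply]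
    rfl
  have hπι : ∀ x : g₀, π₀ (ι x) = x := by
    intro x
    refine hext₀ _ _ ?_
    intro c
    rw [hπ, hBii]
  have hπu : π₀ u = 0 := by
    refine hext₀ _ _ ?_
    intro c
    rw [hπ, hBui, map_zero, LinearMap.zero_apply]
  have hπv : π₀ v = 0 := by
    refine hext₀ _ _ ?_
    intro c
    rw [hπ, hBvi, map_zero, LinearMap.zero_apply]
  -- decomposition of the identity and trace formula
  have hdec : ∀ w : g, w = B w v • u + B w u • v + ι (π₀ w) := by
    intro w
    refine hext _ _ ?_ ?_ ?_
    · simp only [map_add, map_smul, LinearMap.add_apply, LinearMap.smul_apply,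
        hBuu, hBvu, hBiu, hπ, smul_eq_mul, mul_zero, mul_one, zero_add, add_zero]
    · simp only [map_add, map_smul, LinearMap.add_apply, LinearMap.smul_apply,
        hBuv, hBvv, hBiv, smul_eq_mul, mul_zero, mul_one, zero_add, add_zero]
    · intro f
      simp only [map_add, map_smul, LinearMap.add_apply, LinearMap.smul_apply,
        hBui, hBvi, hBii, hπ, smul_eq_mul, mul_zero, mul_one, zero_add, add_zero]
  have htr : ∀ T : g →ₗ[ℝ] g, LinearMap.trace ℝ g T
      = B (T u) v + B (T v) u + LinearMap.trace ℝ g₀ (π₀ ∘ₗ T ∘ₗ ι) := by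
    intro T
    have hid : (LinearMap.id : g →ₗ[ℝ] g)
        = LinearMap.toSpanSingleton ℝ g u ∘ₗ B.flip v
          + LinearMap.toSpanSingleton ℝ g v ∘ₗ B.flip u + ι ∘ₗ π₀ := by
      apply LinearMap.ext; intro w
      simp only [LinearMap.id_apply, LinearMap.add_apply, LinearMap.comp_apply,
        LinearMap.flip_apply, LinearMap.toSpanSingleton_apply]
      exact hdec w
    have h0 : T = T ∘ₗ (LinearMap.id : g →ₗ[ℝ] g) := (LinearMap.comp_id T).symm
    have t1 : LinearMap.trace ℝ g (T ∘ₗ (LinearMap.toSpanSingleton ℝ g u ∘ₗ B.flip v))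
        = B (T u) v := by
      rw [← LinearMap.comp_assoc, LinearMap.trace_comp_comm', tr_one_dim]
      simp [LinearMap.toSpanSingleton_apply]
    have t2 : LinearMap.trace ℝ g (T ∘ₗ (LinearMap.toSpanSingleton ℝ g v ∘ₗ B.flip u))
        = B (T v) u := by
      rw [← LinearMap.comp_assoc, LinearMap.trace_comp_comm', tr_one_dim]
      simp [LinearMap.toSpanSingleton_apply]
    have t3 : LinearMap.trace ℝ g (T ∘ₗ (ι ∘ₗ π₀))
        = LinearMap.trace ℝ g₀ (π₀ ∘ₗ T ∘ₗ ι) := by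
      rw [← LinearMap.comp_assoc, LinearMap.trace_comp_comm']
    conv_lhs => rw [h0, hid, LinearMap.comp_add, LinearMap.comp_add]
    rw [map_add, map_add, t1, t2, t3]
  -- adjoint pairings
  have cD : ∀ a b : g₀, B₀ (D a) b = B₀ a (Dstar b) := by
    intro a b
    rw [hsymm₀ (D a) b, ← hDstar b a, hsymm₀ (Dstar b) a]
  have cK : ∀ a b : g₀, B₀ (K a) b = B₀ a ((-K) b) := by
    intro a b
    have h1 : (-K) b = -(K b) := rfl
    rw [h1, LinearMap.map_neg (B₀ a) (K b), hKskew a b]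
  have hbk : ∀ a b : g₀, (⁅b, a⁆ : g₀) = -⁅a, b⁆ := by
    intro a b; rw [← lie_skew a b, neg_neg]
  have cSf : ∀ x a b : g₀, B₀ (S x a) b = B₀ a ((-(S x)) b) := by
    intro x a b
    calc B₀ (S x a) b = B₀ x ⁅a, b⁆ := hS x a b
    _ = -(B₀ x ⁅b, a⁆) := by rw [hbk a b, map_neg, neg_neg]
    _ = -(B₀ (S x b) a) := by rw [hS]
    _ = -(B₀ a (S x b)) := by rw [hsymm₀ (S x b) a]
    _ = B₀ a ((-(S x)) b) := by
        have h1 : (-(S x)) b = -(S x b) := rfl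
        rw [h1, LinearMap.map_neg (B₀ a) (S x b)]
  have cSflip : ∀ x a b : g₀, B₀ ((S.flip x) a) b = B₀ a ((LieAlgebra.ad ℝ g₀ x) b) := by
    intro x a b
    rw [LinearMap.flip_apply, hS, LieAlgebra.ad_apply]
  have cad : ∀ x a b : g₀, B₀ ((LieAlgebra.ad ℝ g₀ x) a) b = B₀ a ((S.flip x) b) := by
    intro x a b
    rw [hsymm₀ ((LieAlgebra.ad ℝ g₀ x) a) b, ← cSflip x b a, hsymm₀ ((S.flip x) b) a]
  have cA : ∀ a b : g₀, B₀ ((D + Dstar + K) a) b = B₀ a ((Dstar + D + (-K)) b) := by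
    intro a b
    simp only [LinearMap.add_apply, map_add]
    rw [cD, hDstar, cK]
  have cC : ∀ a b : g₀, B₀ ((D - K - Dstar) a) b = B₀ a ((Dstar - (-K) - D) b) := by
    intro a b
    simp only [LinearMap.sub_apply, map_sub]
    rw [cD, hDstar, cK]
  -- trace identities
  have trcomp : ∀ X Xs Y Ys : g₀ →ₗ[ℝ] g₀, (∀ a b, B₀ (X a) b = B₀ a (Xs b)) →
      (∀ a b, B₀ (Y a) b = B₀ a (Ys b)) →
      LinearMap.trace ℝ g₀ (X ∘ₗ Y) = LinearMap.trace ℝ g₀ (Ys ∘ₗ Xs) := by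
    intro X Xs Y Ys hX hY
    apply tr_adj B₀ hnd₀
    intro a b
    rw [LinearMap.comp_apply, LinearMap.comp_apply, hX, hY]
  have trS0 : ∀ x : g₀, LinearMap.trace ℝ g₀ (S x) = 0 := by
    intro x
    have h := tr_adj B₀ hnd₀ (S x) (-(S x)) (cSf x)
    rw [map_neg] at h
    linarith
  have trad : ∀ x : g₀, LinearMap.trace ℝ g₀ (LieAlgebra.ad ℝ g₀ x) = B₀ Z₀ x :=
    fun x => (hZ x).symm
  have trSflip : ∀ x : g₀, LinearMap.trace ℝ g₀ (S.flip x) = B₀ Z₀ x := by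
    intro x
    rw [tr_adj B₀ hnd₀ (S.flip x) (LieAlgebra.ad ℝ g₀ x) (cSflip x), trad]
  -- Z₀ identities
  have hadD : ∀ f : g₀, (LieAlgebra.ad ℝ g₀ (D f) : g₀ →ₗ[ℝ] g₀)
      = D ∘ₗ (LieAlgebra.ad ℝ g₀ f : g₀ →ₗ[ℝ] g₀) - (LieAlgebra.ad ℝ g₀ f : g₀ →ₗ[ℝ] g₀) ∘ₗ D := by
    intro f; apply LinearMap.ext; intro x
    simp only [LinearMap.sub_apply, LinearMap.comp_apply, LieAlgebra.ad_apply]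
    rw [hD f x]
    abel
  have hz1 : ∀ f : g₀, B₀ Z₀ (D f) = 0 := by
    intro f
    rw [hZ (D f)]
    have := congrArg (LinearMap.trace ℝ g₀) (hadD f)
    rw [map_sub, LinearMap.trace_comp_comm' D (LieAlgebra.ad ℝ g₀ f)] at this
    rw [this]
    ring
  have hz2 : ∀ f : g₀, B₀ Z₀ (K f) = -(B₀ (K Z₀) f) := by
    intro f
    rw [hKskew Z₀ f]
    ring
  have hz3 : ∀ f : g₀, B₀ Z₀ (Dstar f) = B₀ (D Z₀) f := by
    intro f
    rw [hsymm₀ Z₀ (Dstar f), hDstar f Z₀, hsymm₀ f (D Z₀)]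
  -- operator form of the Koszul formula
  have hnab₀ : ∀ e : g₀, (2:ℝ) • nabla₀ e
      = (LieAlgebra.ad ℝ g₀ e : g₀ →ₗ[ℝ] g₀) - S e - S.flip e := by
    intro e
    apply LinearMap.ext; intro f
    refine hext₀ _ _ ?_
    intro c
    have h1 := hLC₀ e f c
    have h2 := hS e f c
    have h3 := hS f e c
    have h4 : B₀ ⁅f, c⁆ e = B₀ e ⁅f, c⁆ := hsymm₀ _ _
    have h5 : B₀ ⁅c, e⁆ f = -(B₀ f ⁅e, c⁆) := by
      rw [hbk e c, map_neg, LinearMap.neg_apply, hsymm₀ ⁅e, c⁆ f]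
    simp only [LinearMap.smul_apply, LinearMap.sub_apply, LinearMap.flip_apply,
      LieAlgebra.ad_apply, map_smul, map_sub, LinearMap.neg_apply, smul_eq_mul]
    linarith
  have hflip₀ : ∀ x : g₀, (2:ℝ) • nabla₀.flip x
      = -(LieAlgebra.ad ℝ g₀ x : g₀ →ₗ[ℝ] g₀) - S.flip x - S x := by
    intro x
    apply LinearMap.ext; intro f
    refine hext₀ _ _ ?_
    intro c
    have h1 := hLC₀ f x c
    have h2 := hS f x c
    have h3 := hS x f c
    have h4 : B₀ ⁅x, c⁆ f = B₀ f ⁅x, c⁆ := hsymm₀ _ _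
    have h5 : B₀ ⁅c, f⁆ x = -(B₀ x ⁅f, c⁆) := by
      rw [hbk f c, map_neg, LinearMap.neg_apply, hsymm₀ ⁅f, c⁆ x]
    have h6 : B₀ ⁅f, x⁆ c = -(B₀ ⁅x, f⁆ c) := by
      rw [hbk x f, map_neg, LinearMap.neg_apply]
    simp only [LinearMap.smul_apply, LinearMap.sub_apply, LinearMap.flip_apply,
      LieAlgebra.ad_apply, map_smul, map_sub, map_neg, LinearMap.neg_apply, smul_eq_mul]
    linarith
  have trflip : ∀ x : g₀, LinearMap.trace ℝ g₀ (nabla₀.flip x) = -(B₀ Z₀ x) := by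
    intro x
    have h := congrArg (LinearMap.trace ℝ g₀) (hflip₀ x)
    rw [map_smul, map_sub, map_sub, map_neg, smul_eq_mul, trSflip, trS0, trad] at h
    linarith
  have trXflip : ∀ X Xs : g₀ →ₗ[ℝ] g₀, (∀ a b, B₀ (X a) b = B₀ a (Xs b)) → ∀ f : g₀,
      2 * LinearMap.trace ℝ g₀ (X ∘ₗ nabla₀.flip f)
        = -(LinearMap.trace ℝ g₀ (X ∘ₗ (LieAlgebra.ad ℝ g₀ f : g₀ →ₗ[ℝ] g₀)))
          - LinearMap.trace ℝ g₀ (Xs ∘ₗ (LieAlgebra.ad ℝ g₀ f : g₀ →ₗ[ℝ] g₀))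
          - LinearMap.trace ℝ g₀ (X ∘ₗ S f) := by
    intro X Xs hX f
    have h1 : X ∘ₗ ((2:ℝ) • nabla₀.flip f) = (2:ℝ) • (X ∘ₗ nabla₀.flip f) := by
      apply LinearMap.ext; intro x
      simp only [LinearMap.comp_apply, LinearMap.smul_apply, map_smul]
    have h2 := congrArg (fun M : g₀ →ₗ[ℝ] g₀ => LinearMap.trace ℝ g₀ (X ∘ₗ M)) (hflip₀ f)
    rw [h1, map_smul, smul_eq_mul] at h2
    have h3 : X ∘ₗ (-(LieAlgebra.ad ℝ g₀ f : g₀ →ₗ[ℝ] g₀) - S.flip f - S f)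
        = -(X ∘ₗ (LieAlgebra.ad ℝ g₀ f : g₀ →ₗ[ℝ] g₀)) - X ∘ₗ S.flip f - X ∘ₗ S f := by
      apply LinearMap.ext; intro x
      simp only [LinearMap.comp_apply, LinearMap.sub_apply, LinearMap.neg_apply, map_sub, map_neg]
    rw [h3, map_sub, map_sub, map_neg] at h2
    have h4 : LinearMap.trace ℝ g₀ (X ∘ₗ S.flip f)
        = LinearMap.trace ℝ g₀ (Xs ∘ₗ (LieAlgebra.ad ℝ g₀ f : g₀ →ₗ[ℝ] g₀)) := by
      rw [trcomp X Xs (S.flip f) (LieAlgebra.ad ℝ g₀ f) hX (cSflip f)]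
      exact LinearMap.trace_comp_comm' Xs (LieAlgebra.ad ℝ g₀ f)
    rw [h4] at h2
    linarith
  have trnab : ∀ Y Ys : g₀ →ₗ[ℝ] g₀, (∀ a b, B₀ (Y a) b = B₀ a (Ys b)) → ∀ e : g₀,
      2 * LinearMap.trace ℝ g₀ (nabla₀ e ∘ₗ Y)
        = LinearMap.trace ℝ g₀ (Y ∘ₗ (LieAlgebra.ad ℝ g₀ e : g₀ →ₗ[ℝ] g₀))
          - LinearMap.trace ℝ g₀ (Ys ∘ₗ (LieAlgebra.ad ℝ g₀ e : g₀ →ₗ[ℝ] g₀))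
          - LinearMap.trace ℝ g₀ (Y ∘ₗ S e) := by
    intro Y Ys hY e
    have h1 : ((2:ℝ) • nabla₀ e) ∘ₗ Y = (2:ℝ) • (nabla₀ e ∘ₗ Y) := by
      apply LinearMap.ext; intro x
      simp only [LinearMap.comp_apply, LinearMap.smul_apply]
    have h2 := congrArg (fun M : g₀ →ₗ[ℝ] g₀ => LinearMap.trace ℝ g₀ (M ∘ₗ Y)) (hnab₀ e)
    rw [h1, map_smul, smul_eq_mul] at h2
    have h3 : ((LieAlgebra.ad ℝ g₀ e : g₀ →ₗ[ℝ] g₀) - S e - S.flip e) ∘ₗ Y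
        = (LieAlgebra.ad ℝ g₀ e : g₀ →ₗ[ℝ] g₀) ∘ₗ Y - S e ∘ₗ Y - S.flip e ∘ₗ Y := by
      apply LinearMap.ext; intro x
      simp only [LinearMap.comp_apply, LinearMap.sub_apply]
    rw [h3, map_sub, map_sub] at h2
    have h4 : LinearMap.trace ℝ g₀ ((LieAlgebra.ad ℝ g₀ e : g₀ →ₗ[ℝ] g₀) ∘ₗ Y)
        = LinearMap.trace ℝ g₀ (Y ∘ₗ (LieAlgebra.ad ℝ g₀ e : g₀ →ₗ[ℝ] g₀)) :=
      LinearMap.trace_comp_comm' Y (LieAlgebra.ad ℝ g₀ e)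
    have h5 : LinearMap.trace ℝ g₀ (S e ∘ₗ Y) = LinearMap.trace ℝ g₀ (Y ∘ₗ S e) :=
      LinearMap.trace_comp_comm' Y (S e)
    have h6 : LinearMap.trace ℝ g₀ (S.flip e ∘ₗ Y)
        = LinearMap.trace ℝ g₀ (Ys ∘ₗ (LieAlgebra.ad ℝ g₀ e : g₀ →ₗ[ℝ] g₀)) := by
      rw [LinearMap.trace_comp_comm' Y (S.flip e),
        trcomp Y Ys (S.flip e) (LieAlgebra.ad ℝ g₀ e) hY (cSflip e)]
      exact LinearMap.trace_comp_comm' Ys (LieAlgebra.ad ℝ g₀ e)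
    rw [h4, h5, h6] at h2
    linarith
  have tDS : ∀ x : g₀, LinearMap.trace ℝ g₀ (D ∘ₗ S x)
      = -(LinearMap.trace ℝ g₀ (Dstar ∘ₗ S x)) := by
    intro x
    have h := trcomp D Dstar (S x) (-(S x)) cD (cSf x)
    rw [LinearMap.neg_comp, map_neg] at h
    have h2 : LinearMap.trace ℝ g₀ (S x ∘ₗ Dstar) = LinearMap.trace ℝ g₀ (Dstar ∘ₗ S x) :=
      LinearMap.trace_comp_comm' Dstar (S x)
    linarith
  -- easy cases involving v
  have hflipv : nabla.flip v = 0 := by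
    apply LinearMap.ext; intro w
    rw [LinearMap.flip_apply, n5, LinearMap.zero_apply]
  have hnv : nabla v = 0 := by
    apply LinearMap.ext; intro w
    rw [n6 w, LinearMap.zero_apply]
  have hadv : (LieAlgebra.ad ℝ g v : g →ₗ[ℝ] g) = 0 := by
    apply LinearMap.ext; intro w
    rw [LieAlgebra.ad_apply, hbr3', LinearMap.zero_apply]
  have keyv1 : ∀ x : g, ricci nabla x v = 0 := by
    intro x
    simp only [ricci]
    rw [n5 x, hflipv]
    simp
  have keyv2 : ∀ y : g, ricci nabla v y = 0 := by
    intro y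
    simp only [ricci]
    rw [hnv, hadv]
    simp
  -- Ric(u) paired with u
  have key1 : ricci nabla u u = Γ := by
    simp only [ricci]
    rw [htr]
    have hTu : B ((nabla.flip (nabla u u) - nabla u ∘ₗ nabla.flip u +
        nabla.flip u ∘ₗ (LieAlgebra.ad ℝ g u : g →ₗ[ℝ] g)) u) v = 0 := by
      simp only [LinearMap.sub_apply, LinearMap.add_apply, LinearMap.comp_apply,
        LinearMap.flip_apply, LieAlgebra.ad_apply, lie_self, map_zero, LinearMap.zero_apply,
        map_sub, sub_self, add_zero, sub_zero]
    have hTv : B ((nabla.flip (nabla u u) - nabla u ∘ₗ nabla.flip u +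
        nabla.flip u ∘ₗ (LieAlgebra.ad ℝ g u : g →ₗ[ℝ] g)) v) u = 0 := by
      simp only [LinearMap.sub_apply, LinearMap.add_apply, LinearMap.comp_apply,
        LinearMap.flip_apply, LieAlgebra.ad_apply, hbr3, map_zero, LinearMap.zero_apply,
        n6, n5, sub_zero, add_zero, zero_sub, map_neg, neg_zero, sub_self]
    have hTE : π₀ ∘ₗ (nabla.flip (nabla u u) - nabla u ∘ₗ nabla.flip u +
        nabla.flip u ∘ₗ (LieAlgebra.ad ℝ g u : g →ₗ[ℝ] g)) ∘ₗ ι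
        = -(nabla₀.flip L) + (4⁻¹ : ℝ) • ((D - K - Dstar) ∘ₗ (D + Dstar + K))
          - (2⁻¹ : ℝ) • ((D + Dstar + K) ∘ₗ D) := by
      apply LinearMap.ext; intro f
      simp only [LinearMap.comp_apply, LinearMap.sub_apply, LinearMap.add_apply,
        LinearMap.smul_apply, LinearMap.neg_apply, LinearMap.flip_apply, LieAlgebra.ad_apply,
        n1, n2, n3, n4, n5, n6, hbr1, map_add, map_smul, map_neg, map_sub, map_zero,
        LinearMap.zero_apply, hπι, hπu, hπv, smul_zero, add_zero, zero_add, neg_zero]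
      try module
    rw [hTu, hTv, hTE]
    have e2 : (D - K - Dstar) ∘ₗ (D + Dstar + K)
        = ((D ∘ₗ D + D ∘ₗ Dstar + D ∘ₗ K) - (K ∘ₗ D + K ∘ₗ Dstar + K ∘ₗ K))
          - (Dstar ∘ₗ D + Dstar ∘ₗ Dstar + Dstar ∘ₗ K) := by
      apply LinearMap.ext; intro x
      simp only [LinearMap.sub_apply, LinearMap.add_apply, LinearMap.comp_apply,
        map_add, map_sub]
      abel
    have e3 : (D + Dstar + K) ∘ₗ D = D ∘ₗ D + Dstar ∘ₗ D + K ∘ₗ D := by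
      apply LinearMap.ext; intro x
      simp only [LinearMap.add_apply, LinearMap.comp_apply]
    rw [e2, e3]
    simp only [map_add, map_sub, map_neg, map_smul, smul_eq_mul]
    have r1 : LinearMap.trace ℝ g₀ (D ∘ₗ Dstar) = LinearMap.trace ℝ g₀ (Dstar ∘ₗ D) :=
      LinearMap.trace_comp_comm' Dstar D
    have r2 : LinearMap.trace ℝ g₀ (Dstar ∘ₗ Dstar) = LinearMap.trace ℝ g₀ (D ∘ₗ D) :=
      trcomp Dstar D Dstar D hDstar hDstar
    have r3 : LinearMap.trace ℝ g₀ (D ∘ₗ K) = -(LinearMap.trace ℝ g₀ (K ∘ₗ Dstar)) := by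
      have h := trcomp D Dstar K (-K) cD cK
      rw [LinearMap.neg_comp, map_neg] at h
      linarith
    have r4 : LinearMap.trace ℝ g₀ (K ∘ₗ D) = LinearMap.trace ℝ g₀ (D ∘ₗ K) :=
      LinearMap.trace_comp_comm' D K
    have r5 : LinearMap.trace ℝ g₀ (Dstar ∘ₗ K) = LinearMap.trace ℝ g₀ (K ∘ₗ Dstar) :=
      LinearMap.trace_comp_comm' K Dstar
    have r6 := trflip L
    have r7 : B₀ L Z₀ = B₀ Z₀ L := hsymm₀ L Z₀
    rw [hΓ]
    linarith
  -- Ric(u) paired with g₀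
  have key2 : ∀ f : g₀, ricci nabla u (ι f) = B₀ Δ f := by
    intro f
    simp only [ricci]
    rw [htr]
    have hTu : B ((nabla.flip (nabla u (ι f)) - nabla u ∘ₗ nabla.flip (ι f) +
        nabla.flip (ι f) ∘ₗ (LieAlgebra.ad ℝ g u : g →ₗ[ℝ] g)) u) v = 0 := by
      simp only [LinearMap.sub_apply, LinearMap.add_apply, LinearMap.comp_apply,
        LinearMap.flip_apply, LieAlgebra.ad_apply, lie_self, map_zero, LinearMap.zero_apply,
        map_sub, sub_self, add_zero, sub_zero]
    have hTv : B ((nabla.flip (nabla u (ι f)) - nabla u ∘ₗ nabla.flip (ι f) +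
        nabla.flip (ι f) ∘ₗ (LieAlgebra.ad ℝ g u : g →ₗ[ℝ] g)) v) u = 0 := by
      simp only [LinearMap.sub_apply, LinearMap.add_apply, LinearMap.comp_apply,
        LinearMap.flip_apply, LieAlgebra.ad_apply, hbr3, map_zero, LinearMap.zero_apply,
        n6, n5, sub_zero, add_zero, zero_sub, map_neg, neg_zero, sub_self]
    have hTE : π₀ ∘ₗ (nabla.flip (nabla u (ι f)) - nabla u ∘ₗ nabla.flip (ι f) +
        nabla.flip (ι f) ∘ₗ (LieAlgebra.ad ℝ g u : g →ₗ[ℝ] g)) ∘ₗ ι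
        = (2⁻¹ : ℝ) • (nabla₀.flip (D f) - nabla₀.flip (K f) - nabla₀.flip (Dstar f))
          - (2⁻¹ : ℝ) • ((D - K - Dstar) ∘ₗ nabla₀.flip f) + nabla₀.flip f ∘ₗ D := by
      apply LinearMap.ext; intro e
      simp only [LinearMap.comp_apply, LinearMap.sub_apply, LinearMap.add_apply,
        LinearMap.smul_apply, LinearMap.neg_apply, LinearMap.flip_apply, LieAlgebra.ad_apply,
        n1, n2, n3, n4, n5, n6, hbr1, map_add, map_smul, map_neg, map_sub, map_zero,
        LinearMap.zero_apply, hπι, hπu, hπv, smul_zero, add_zero, zero_add, neg_zero]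
      try module
    rw [hTu, hTv, hTE]
    simp only [map_add, map_sub, map_neg, map_smul, smul_eq_mul]
    simp only [LinearMap.sub_comp, LinearMap.add_comp, LinearMap.neg_comp,
      map_sub, map_add, map_neg]
    -- traces
    have a1 := trflip (D f)
    have a2 := trflip (K f)
    have a3 := trflip (Dstar f)
    have hX := trXflip (D - K - Dstar) (Dstar - -K - D) cC f
    have hXD := trXflip D Dstar cD f
    simp only [LinearMap.sub_comp, LinearMap.add_comp, LinearMap.neg_comp,
      map_sub, map_add, map_neg] at hX
    have hDS := tDS f
    have hcomm : LinearMap.trace ℝ g₀ (nabla₀.flip f ∘ₗ D)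
        = LinearMap.trace ℝ g₀ (D ∘ₗ nabla₀.flip f) :=
      LinearMap.trace_comp_comm' D (nabla₀.flip f)
    rw [hΔ f]
    have eΔ : (D + Dstar) ∘ₗ (LieAlgebra.ad ℝ g₀ f : g₀ →ₗ[ℝ] g₀)
        = D ∘ₗ (LieAlgebra.ad ℝ g₀ f : g₀ →ₗ[ℝ] g₀)
          + Dstar ∘ₗ (LieAlgebra.ad ℝ g₀ f : g₀ →ₗ[ℝ] g₀) := LinearMap.add_comp _ _ _
    rw [eΔ, map_add]
    have eZ : B₀ ((D - K) Z₀) f = B₀ (D Z₀) f - B₀ (K Z₀) f := by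
      rw [LinearMap.sub_apply, map_sub, LinearMap.sub_apply]
    rw [eZ]
    have z1 := hz1 f
    have z2 := hz2 f
    have z3 := hz3 f
    linarith
  -- Ric(ι e) paired with u
  have key3 : ∀ e : g₀, ricci nabla (ι e) u = B₀ Δ e := by
    intro e
    simp only [ricci]
    rw [htr]
    have hTu : B ((nabla.flip (nabla (ι e) u) - nabla (ι e) ∘ₗ nabla.flip u +
        nabla.flip u ∘ₗ (LieAlgebra.ad ℝ g (ι e) : g →ₗ[ℝ] g)) u) v = 0 := by
      simp only [LinearMap.sub_apply, LinearMap.add_apply, LinearMap.comp_apply,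
        LinearMap.flip_apply, LieAlgebra.ad_apply,
        n1, n2, n3, n4, n5, n6, hbr1, hbr1', map_add, map_smul, map_neg, map_sub, map_zero,
        LinearMap.zero_apply, LinearMap.smul_apply, LinearMap.neg_apply,
        hBiv, hBvv, hBuv, smul_eq_mul, mul_zero, zero_mul, add_zero, zero_add,
        smul_zero, neg_zero, sub_zero, zero_sub, sub_self, neg_neg]
      try ring
    have hTv : B ((nabla.flip (nabla (ι e) u) - nabla (ι e) ∘ₗ nabla.flip u +
        nabla.flip u ∘ₗ (LieAlgebra.ad ℝ g (ι e) : g →ₗ[ℝ] g)) v) u = 0 := by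
      simp only [LinearMap.sub_apply, LinearMap.add_apply, LinearMap.comp_apply,
        LinearMap.flip_apply, LieAlgebra.ad_apply, hbr3, map_zero, LinearMap.zero_apply,
        n6, n5, sub_zero, add_zero, zero_sub, map_neg, neg_zero, sub_self]
    have hTE : π₀ ∘ₗ (nabla.flip (nabla (ι e) u) - nabla (ι e) ∘ₗ nabla.flip u +
        nabla.flip u ∘ₗ (LieAlgebra.ad ℝ g (ι e) : g →ₗ[ℝ] g)) ∘ₗ ι
        = -((2⁻¹ : ℝ) • (nabla₀.flip (D e) + nabla₀.flip (Dstar e) + nabla₀.flip (K e)))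
          + (2⁻¹ : ℝ) • (nabla₀ e ∘ₗ (D + Dstar + K))
          - (2⁻¹ : ℝ) • ((D + Dstar + K) ∘ₗ (LieAlgebra.ad ℝ g₀ e : g₀ →ₗ[ℝ] g₀)) := by
      apply LinearMap.ext; intro f
      simp only [LinearMap.comp_apply, LinearMap.sub_apply, LinearMap.add_apply,
        LinearMap.smul_apply, LinearMap.neg_apply, LinearMap.flip_apply, LieAlgebra.ad_apply,
        n1, n2, n3, n4, n5, n6, hbr1, hbr1', hbr2, map_add, map_smul, map_neg, map_sub,
        map_zero, LinearMap.zero_apply, hπι, hπu, hπv, smul_zero, add_zero, zero_add, neg_zero]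
      try module
    rw [hTu, hTv, hTE]
    simp only [map_add, map_sub, map_neg, map_smul, smul_eq_mul]
    simp only [LinearMap.sub_comp, LinearMap.add_comp, LinearMap.neg_comp,
      LinearMap.comp_add, LinearMap.comp_sub, map_sub, map_add, map_neg]
    have a1 := trflip (D e)
    have a2 := trflip (Dstar e)
    have a3 := trflip (K e)
    have hY := trnab (D + Dstar + K) (Dstar + D + -K) cA e
    simp only [LinearMap.sub_comp, LinearMap.add_comp, LinearMap.neg_comp,
      LinearMap.comp_add, LinearMap.comp_sub, map_sub, map_add, map_neg] at hY
    have hDS := tDS e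
    rw [hΔ e]
    have eΔ : (D + Dstar) ∘ₗ (LieAlgebra.ad ℝ g₀ e : g₀ →ₗ[ℝ] g₀)
        = D ∘ₗ (LieAlgebra.ad ℝ g₀ e : g₀ →ₗ[ℝ] g₀)
          + Dstar ∘ₗ (LieAlgebra.ad ℝ g₀ e : g₀ →ₗ[ℝ] g₀) := LinearMap.add_comp _ _ _
    rw [eΔ, map_add]
    have eZ : B₀ ((D - K) Z₀) e = B₀ (D Z₀) e - B₀ (K Z₀) e := by
      rw [LinearMap.sub_apply, map_sub, LinearMap.sub_apply]
    rw [eZ]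
    have z1 := hz1 e
    have z2 := hz2 e
    have z3 := hz3 e
    linarith
  -- Ric(ι e) paired with g₀
  have key4 : ∀ e f : g₀, ricci nabla (ι e) (ι f) = ricci nabla₀ e f := by
    intro e f
    simp only [ricci]
    rw [htr]
    have hTu : B ((nabla.flip (nabla (ι e) (ι f)) - nabla (ι e) ∘ₗ nabla.flip (ι f) +
        nabla.flip (ι f) ∘ₗ (LieAlgebra.ad ℝ g (ι e) : g →ₗ[ℝ] g)) u) v = 0 := by
      simp only [LinearMap.sub_apply, LinearMap.add_apply, LinearMap.comp_apply,
        LinearMap.flip_apply, LieAlgebra.ad_apply,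
        n1, n2, n3, n4, n5, n6, hbr1, hbr1', hbr2, map_add, map_smul, map_neg, map_sub,
        map_zero, LinearMap.zero_apply, LinearMap.smul_apply, LinearMap.neg_apply,
        hBiv, hBvv, hBuv, smul_eq_mul, mul_zero, zero_mul, add_zero, zero_add,
        smul_zero, neg_zero, sub_zero, zero_sub, sub_self, neg_neg]
      try ring
    have hTv : B ((nabla.flip (nabla (ι e) (ι f)) - nabla (ι e) ∘ₗ nabla.flip (ι f) +
        nabla.flip (ι f) ∘ₗ (LieAlgebra.ad ℝ g (ι e) : g →ₗ[ℝ] g)) v) u = 0 := by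
      simp only [LinearMap.sub_apply, LinearMap.add_apply, LinearMap.comp_apply,
        LinearMap.flip_apply, LieAlgebra.ad_apply, hbr3, map_zero, LinearMap.zero_apply,
        n6, n5, sub_zero, add_zero, zero_sub, map_neg, neg_zero, sub_self]
    have hTE : π₀ ∘ₗ (nabla.flip (nabla (ι e) (ι f)) - nabla (ι e) ∘ₗ nabla.flip (ι f) +
        nabla.flip (ι f) ∘ₗ (LieAlgebra.ad ℝ g (ι e) : g →ₗ[ℝ] g)) ∘ₗ ι
        = nabla₀.flip (nabla₀ e f) - nabla₀ e ∘ₗ nabla₀.flip f +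
            nabla₀.flip f ∘ₗ (LieAlgebra.ad ℝ g₀ e : g₀ →ₗ[ℝ] g₀) := by
      apply LinearMap.ext; intro c
      simp only [LinearMap.comp_apply, LinearMap.sub_apply, LinearMap.add_apply,
        LinearMap.smul_apply, LinearMap.neg_apply, LinearMap.flip_apply, LieAlgebra.ad_apply,
        n1, n2, n3, n4, n5, n6, hbr1, hbr1', hbr2, map_add, map_smul, map_neg, map_sub,
        map_zero, LinearMap.zero_apply, hπι, hπu, hπv, smul_zero, add_zero, zero_add, neg_zero]
      try module
    rw [hTu, hTv, hTE]
    ring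
  -- final assembly
  refine ⟨?_, ?_, ?_⟩
  · refine hext _ _ ?_ ?_ ?_
    · rw [hRic, key1]
      simp only [map_add, map_smul, LinearMap.add_apply, LinearMap.smul_apply,
        hBiu, hBvu, smul_eq_mul, mul_one, zero_add, add_zero, mul_zero]
    · rw [hRic, keyv1]
      simp only [map_add, map_smul, LinearMap.add_apply, LinearMap.smul_apply,
        hBiv, hBvv, smul_eq_mul, mul_one, zero_add, add_zero, mul_zero]
    · intro f
      rw [hRic, key2 f]
      simp only [map_add, map_smul, LinearMap.add_apply, LinearMap.smul_apply,
        hBii, hBvi, smul_eq_mul, mul_one, zero_add, add_zero, mul_zero]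
  · intro e
    refine hext _ _ ?_ ?_ ?_
    · rw [hRic, key3 e]
      simp only [map_add, map_smul, LinearMap.add_apply, LinearMap.smul_apply,
        hBiu, hBvu, smul_eq_mul, mul_one, zero_add, add_zero, mul_zero]
    · rw [hRic, keyv1]
      simp only [map_add, map_smul, LinearMap.add_apply, LinearMap.smul_apply,
        hBiv, hBvv, smul_eq_mul, mul_one, zero_add, add_zero, mul_zero]
    · intro f
      rw [hRic, key4 e f, ← hRic₀ e f]
      simp only [map_add, map_smul, LinearMap.add_apply, LinearMap.smul_apply,
        hBii, hBvi, smul_eq_mul, mul_one, zero_add, add_zero, mul_zero]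
  · refine hext _ _ ?_ ?_ ?_
    · rw [hRic, keyv2]
      simp only [map_zero, LinearMap.zero_apply]
    · rw [hRic, keyv2]
      simp only [map_zero, LinearMap.zero_apply]
    · intro f
      rw [hRic, keyv2]
      simp only [map_zero, LinearMap.zero_apply]
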